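/- Let q ∈ (1,∞) and κ ≥ 0. There is a constant c ≥ 1 depending only on q such that for all P, Q, R ∈ ℝ^{N×n} (with Frobenius norm |·|): ρ'_{|P|}(|Q − P|) ≤ c ρ'_{|R|}(|Q − R|) + c ρ'_{|R|}(|P − R|), where ρ'_a(t) = (κ + a + t)^{q−2} t. -/
import Mathlib


/-- The derivative of the shifted `N`-function: `ρ'_a(t) = (κ+a+t)^{q−2} t`. -/
noncomputable def rhoShiftDeriv (κ q a t : ℝ) : ℝ := (κ + a + t) ^ (q - 2) * t

/-- Monotonicity in `t` of `t ↦ (C+t)^{q-2} t` for `1 < q < 2`. -/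
lemma rho_mono_t {q C : ℝ} (hq : 1 < q) (hq2 : q < 2) (hC : 0 ≤ C)
    {t₁ t₂ : ℝ} (h1 : 0 ≤ t₁) (h12 : t₁ ≤ t₂) :
    (C + t₁) ^ (q - 2) * t₁ ≤ (C + t₂) ^ (q - 2) * t₂ := by
  rcases eq_or_lt_of_le h1 with h0 | h1pos
  · rw [← h0, mul_zero]
    have : (0:ℝ) ≤ (C + t₂) ^ (q - 2) := Real.rpow_nonneg (by linarith) _
    nlinarith
  · have ht2 : 0 < t₂ := lt_of_lt_of_le h1pos h12
    have p1 : (0:ℝ) < C + t₁ := by linarith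
    have p2 : (0:ℝ) < C + t₂ := by linarith
    have e1 : (C + t₁) ^ (q - 2) = ((C + t₁) ^ (2 - q))⁻¹ := by
      rw [show (q - 2 : ℝ) = -(2 - q) by ring, Real.rpow_neg p1.le]
    have e2 : (C + t₂) ^ (q - 2) = ((C + t₂) ^ (2 - q))⁻¹ := by
      rw [show (q - 2 : ℝ) = -(2 - q) by ring, Real.rpow_neg p2.le]
    have q1 : (0:ℝ) < (C + t₁) ^ (2 - q) := Real.rpow_pos_of_pos p1 _
    have q2 : (0:ℝ) < (C + t₂) ^ (2 - q) := Real.rpow_pos_of_pos p2 _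
    rw [e1, e2, inv_mul_eq_div, inv_mul_eq_div, div_le_div_iff₀ q1 q2]
    -- goal: t₁ * (C + t₂) ^ (2 - q) ≤ t₂ * (C + t₁) ^ (2 - q)
    have hr1 : (1:ℝ) ≤ (C + t₂) / (C + t₁) := (one_le_div p1).2 (by linarith)
    have hA : ((C + t₂) / (C + t₁)) ^ (2 - q) ≤ (C + t₂) / (C + t₁) := by
      calc ((C + t₂) / (C + t₁)) ^ (2 - q)
          ≤ ((C + t₂) / (C + t₁)) ^ (1:ℝ) :=
            Real.rpow_le_rpow_of_exponent_le hr1 (by linarith)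
        _ = (C + t₂) / (C + t₁) := Real.rpow_one _
    have hB : (C + t₂) / (C + t₁) ≤ t₂ / t₁ := by
      rw [div_le_div_iff₀ p1 h1pos]
      nlinarith
    have hrw : ((C + t₂) / (C + t₁)) ^ (2 - q)
        = (C + t₂) ^ (2 - q) / (C + t₁) ^ (2 - q) := Real.div_rpow p2.le p1.le _
    have hkey : (C + t₂) ^ (2 - q) / (C + t₁) ^ (2 - q) ≤ t₂ / t₁ :=
      hrw ▸ hA.trans hB
    rw [div_le_div_iff₀ q1 h1pos] at hkey
    nlinarith
/-- Key shift-change estimate. -/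
lemma rho_key {q κ a b s t : ℝ} (hq : 1 < q) (hκ : 0 ≤ κ) (ha : 0 ≤ a) (hb : 0 ≤ b)
    (hs : 0 ≤ s) (ht : 0 ≤ t) (hab : a ≤ b + s) (hba : b ≤ a + s) (hts : t ≤ 2 * s) :
    (κ + a + t) ^ (q - 2) * t ≤ 2 * 3 ^ |q - 2| * ((κ + b + s) ^ (q - 2) * s) := by
  have h3 : (1:ℝ) ≤ (3:ℝ) ^ |q - 2| := by
    calc (1:ℝ) = (3:ℝ) ^ (0:ℝ) := (Real.rpow_zero 3).symm
      _ ≤ _ := Real.rpow_le_rpow_of_exponent_le (by norm_num) (abs_nonneg _)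
  rcases eq_or_lt_of_le hs with hs0 | hspos
  · have ht0 : t = 0 := le_antisymm (by linarith) ht
    rw [ht0, mul_zero, ← hs0]
    simp
  · have pb : (0:ℝ) < κ + b + s := by linarith
    have prhs : (0:ℝ) ≤ (κ + b + s) ^ (q - 2) * s :=
      mul_nonneg (Real.rpow_nonneg pb.le _) hs
    rcases le_or_gt 2 q with h2q | hq2
    · -- case q ≥ 2
      have habs : |q - 2| = q - 2 := abs_of_nonneg (by linarith)
      have hbase : κ + a + t ≤ 3 * (κ + b + s) := by linarith
      have h1 : (κ + a + t) ^ (q - 2) ≤ (3 * (κ + b + s)) ^ (q - 2) :=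
        Real.rpow_le_rpow (by linarith) hbase (by linarith)
      have h2 : (3 * (κ + b + s)) ^ (q - 2) = 3 ^ (q - 2) * (κ + b + s) ^ (q - 2) :=
        Real.mul_rpow (by norm_num) pb.le
      have hnn : (0:ℝ) ≤ (κ + a + t) ^ (q - 2) := Real.rpow_nonneg (by linarith) _
      have h3nn : (0:ℝ) ≤ (3:ℝ) ^ (q - 2) := Real.rpow_nonneg (by norm_num) _
      have hbn : (0:ℝ) ≤ (κ + b + s) ^ (q - 2) := Real.rpow_nonneg pb.le _
      calc (κ + a + t) ^ (q - 2) * t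
          ≤ (3 ^ (q - 2) * (κ + b + s) ^ (q - 2)) * (2 * s) := by
            rw [← h2]; exact mul_le_mul h1 hts ht (by rw [h2]; positivity)
        _ = 2 * 3 ^ (q - 2) * ((κ + b + s) ^ (q - 2) * s) := by ring
        _ = 2 * 3 ^ |q - 2| * ((κ + b + s) ^ (q - 2) * s) := by rw [habs]
    · -- case q < 2
      have step1 : (κ + a + t) ^ (q - 2) * t ≤ (κ + a + 2 * s) ^ (q - 2) * (2 * s) :=
        rho_mono_t hq hq2 (by linarith) ht hts
      have pa : (0:ℝ) < κ + a + 2 * s := by linarith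
      have step2 : (κ + a + 2 * s) ^ (q - 2) ≤ (κ + b + s) ^ (q - 2) :=
        Real.rpow_le_rpow_of_nonpos pb (by linarith) (by linarith)
      calc (κ + a + t) ^ (q - 2) * t
          ≤ (κ + b + s) ^ (q - 2) * (2 * s) := by
            refine step1.trans (mul_le_mul_of_nonneg_right step2 (by linarith))
        _ = 2 * ((κ + b + s) ^ (q - 2) * s) := by ring
        _ ≤ 2 * 3 ^ |q - 2| * ((κ + b + s) ^ (q - 2) * s) := by nlinarith

/-- (Change of shift, Lemma `lem:shift_ch` (b), for constant exponent `q`.)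
Let `q ∈ (1,∞)` and `κ ≥ 0`. There is `c ≥ 1` depending only on `q` such that for all
matrices `P, Q, R`:
`ρ'_{|P|}(|Q−P|) ≤ c ρ'_{|R|}(|Q−R|) + c ρ'_{|R|}(|P−R|)`. -/
theorem stmt15 (N n : ℕ) (q : ℝ) (hq : 1 < q) :
    ∃ c : ℝ, 1 ≤ c ∧ ∀ κ : ℝ, 0 ≤ κ →
      ∀ P Q R : EuclideanSpace ℝ (Fin N × Fin n),
        rhoShiftDeriv κ q ‖P‖ ‖Q - P‖ ≤
          c * rhoShiftDeriv κ q ‖R‖ ‖Q - R‖ + c * rhoShiftDeriv κ q ‖R‖ ‖P - R‖ := by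
  have h3 : (1:ℝ) ≤ (3:ℝ) ^ |q - 2| := by
    calc (1:ℝ) = (3:ℝ) ^ (0:ℝ) := (Real.rpow_zero 3).symm
      _ ≤ _ := Real.rpow_le_rpow_of_exponent_le (by norm_num) (abs_nonneg _)
  refine ⟨2 * 3 ^ |q - 2|, by linarith, ?_⟩
  intro κ hκ P Q R
  set y := ‖Q - R‖ with hy
  set z := ‖P - R‖ with hz
  set s := max y z with hsdef
  have hy0 : 0 ≤ y := norm_nonneg _
  have hz0 : 0 ≤ z := norm_nonneg _
  have hs0 : 0 ≤ s := le_trans hy0 (le_max_left _ _)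
  have htri : ‖Q - P‖ ≤ y + z := by
    calc ‖Q - P‖ = ‖(Q - R) + (R - P)‖ := by abel_nf
      _ ≤ ‖Q - R‖ + ‖R - P‖ := norm_add_le _ _
      _ = y + z := by rw [norm_sub_rev R P]
  have hts : ‖Q - P‖ ≤ 2 * s := by
    have := le_max_left y z
    have := le_max_right y z
    linarith
  have hPR : ‖P‖ ≤ ‖R‖ + s := by
    have h := norm_sub_norm_le P R
    have := le_max_right y z
    linarith
  have hRP : ‖R‖ ≤ ‖P‖ + s := by
    have h := norm_sub_norm_le R P
    have h2 : ‖R - P‖ = z := norm_sub_rev R P ▸ rfl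
    have := le_max_right y z
    linarith
  have key : rhoShiftDeriv κ q ‖P‖ ‖Q - P‖ ≤
      2 * 3 ^ |q - 2| * ((κ + ‖R‖ + s) ^ (q - 2) * s) :=
    rho_key hq hκ (norm_nonneg _) (norm_nonneg _) hs0 (norm_nonneg _) hPR hRP hts
  have hynn : (0:ℝ) ≤ rhoShiftDeriv κ q ‖R‖ y :=
    mul_nonneg (Real.rpow_nonneg (by positivity) _) hy0
  have hznn : (0:ℝ) ≤ rhoShiftDeriv κ q ‖R‖ z :=
    mul_nonneg (Real.rpow_nonneg (by positivity) _) hz0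
  have hcnn : (0:ℝ) ≤ 2 * 3 ^ |q - 2| := by linarith
  have hmax : (κ + ‖R‖ + s) ^ (q - 2) * s ≤
      rhoShiftDeriv κ q ‖R‖ y + rhoShiftDeriv κ q ‖R‖ z := by
    unfold rhoShiftDeriv at hynn hznn ⊢
    rcases max_cases y z with ⟨he, _⟩ | ⟨he, _⟩
    · rw [hsdef, he]; linarith
    · rw [hsdef, he]; linarith
  calc rhoShiftDeriv κ q ‖P‖ ‖Q - P‖
      ≤ 2 * 3 ^ |q - 2| * ((κ + ‖R‖ + s) ^ (q - 2) * s) := key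
    _ ≤ 2 * 3 ^ |q - 2| * (rhoShiftDeriv κ q ‖R‖ y + rhoShiftDeriv κ q ‖R‖ z) :=
        mul_le_mul_of_nonneg_left hmax hcnn
    _ = 2 * 3 ^ |q - 2| * rhoShiftDeriv κ q ‖R‖ y
        + 2 * 3 ^ |q - 2| * rhoShiftDeriv κ q ‖R‖ z := by ring
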